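/- For b > 0, lim_{c → 0} I(b,c) = π/√b, where I(b,c) = √3 ∫₀¹ dt/√(t(1−t)(y₀ t − y₁)) with y₀ = (−3b+√(9b²+24c))/2, y₁ = −(3b+√(9b²+24c))/2. In particular ∫₀¹ dt/√(t(1−t)) = π. -/

import Mathlib

open Set MeasureTheory Filter

/-- integrability of the base function on `Ioo 0 1` -/
lemma kdv_aux_integrable :
    IntegrableOn (fun t : ℝ => 1 / Real.sqrt (t * (1 - t))) (Ioo (0:ℝ) 1) := by
  have h1 : IntegrableOn (fun t : ℝ => 1 / Real.sqrt t) (Ioo (0:ℝ) 1) := by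
    have h := (intervalIntegral.intervalIntegrable_rpow' (a := 0) (b := 1)
      (r := -(1/2)) (by norm_num))
    rw [intervalIntegrable_iff_integrableOn_Ioo_of_le zero_le_one] at h
    refine h.congr_fun (fun t ht => ?_) measurableSet_Ioo
    beta_reduce; rw [Real.rpow_neg ht.1.le, ← Real.sqrt_eq_rpow, one_div]
  have h2 : IntegrableOn (fun t : ℝ => 1 / Real.sqrt (1 - t)) (Ioo (0:ℝ) 1) := by
    have h := (intervalIntegral.intervalIntegrable_rpow' (a := 0) (b := 1)
      (r := -(1/2)) (by norm_num)).comp_sub_left 1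
    norm_num at h
    replace h := h.symm
    rw [intervalIntegrable_iff_integrableOn_Ioo_of_le zero_le_one] at h
    refine h.congr_fun (fun t ht => ?_) measurableSet_Ioo
    beta_reduce; rw [Real.rpow_neg (by linarith [ht.2] : (0:ℝ) ≤ 1 - t), ← Real.sqrt_eq_rpow, one_div]
  refine Integrable.mono' (h1.add h2) ?_ ?_
  · exact (Measurable.aestronglyMeasurable (by fun_prop))
  · rw [ae_restrict_iff' measurableSet_Ioo]
    refine Filter.Eventually.of_forall (fun t ht => ?_)
    have h0 : (0:ℝ) < t := ht.1
    have h1t : (0:ℝ) < 1 - t := by linarith [ht.2]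
    have hst : 0 < Real.sqrt t := Real.sqrt_pos.2 h0
    have hs1t : 0 < Real.sqrt (1 - t) := Real.sqrt_pos.2 h1t
    have hsum : (1:ℝ) ≤ Real.sqrt t + Real.sqrt (1 - t) := by
      nlinarith [Real.sq_sqrt h0.le, Real.sq_sqrt h1t.le, mul_pos hst hs1t]
    have hnn : 0 ≤ 1 / Real.sqrt (t * (1 - t)) := by positivity
    simp only [Pi.add_apply]
    rw [Real.norm_of_nonneg hnn, Real.sqrt_mul h0.le]
    have heq : 1 / Real.sqrt t + 1 / Real.sqrt (1 - t)
        = (Real.sqrt (1 - t) + Real.sqrt t) / (Real.sqrt t * Real.sqrt (1 - t)) := by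
      field_simp
    rw [heq, div_le_div_iff₀ (by positivity) (by positivity)]
    nlinarith [mul_pos hst hs1t]

/-- the base integral: `∫ t in Ioo 0 1, 1/√(t(1-t)) = π` -/
lemma kdv_aux_base :
    (∫ t in Ioo (0:ℝ) 1, 1 / Real.sqrt (t * (1 - t))) = Real.pi := by
  have hInt : IntervalIntegrable (fun t : ℝ => 1 / Real.sqrt (t * (1 - t))) volume 0 1 := by
    rw [intervalIntegrable_iff_integrableOn_Ioo_of_le zero_le_one]
    exact kdv_aux_integrable
  have hFc : Continuous (fun t : ℝ => Real.arcsin (2 * t - 1)) :=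
    Real.continuous_arcsin.comp (by continuity)
  have key : (∫ t in (0:ℝ)..1, 1 / Real.sqrt (t * (1 - t)))
      = Real.pi / 2 - -(Real.pi / 2) := by
    refine intervalIntegral.integral_eq_sub_of_hasDerivAt_of_tendsto zero_lt_one
      (f := fun t : ℝ => Real.arcsin (2 * t - 1)) ?_ hInt ?_ ?_
    · intro t ht
      have h0 : (0:ℝ) < t := ht.1
      have h1t : (0:ℝ) < 1 - t := by linarith [ht.2]
      have hne1 : 2 * t - 1 ≠ -1 := by intro h; nlinarith
      have hne2 : 2 * t - 1 ≠ 1 := by intro h; nlinarith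
      have hinner : HasDerivAt (fun t : ℝ => 2 * t - 1) 2 t := by
        simpa using ((hasDerivAt_id t).const_mul 2).sub_const 1
      have h := (Real.hasDerivAt_arcsin hne1 hne2).comp t hinner
      have hq : Real.sqrt (1 - (2 * t - 1) ^ 2) = 2 * Real.sqrt (t * (1 - t)) := by
        rw [show (1:ℝ) - (2 * t - 1) ^ 2 = 2 ^ 2 * (t * (1 - t)) by ring,
          Real.sqrt_mul (by positivity : (0:ℝ) ≤ 2 ^ 2),
          Real.sqrt_sq (by norm_num : (0:ℝ) ≤ 2)]
      have hs : 0 < Real.sqrt (t * (1 - t)) := Real.sqrt_pos.2 (by positivity)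
      refine HasDerivAt.congr_deriv h ?_
      rw [hq]
      field_simp
    · have := (hFc.tendsto 0).mono_left (nhdsWithin_le_nhds (s := Ioi (0:ℝ)))
      simpa using this
    · have := (hFc.tendsto 1).mono_left (nhdsWithin_le_nhds (s := Iio (1:ℝ)))
      norm_num at this
      simpa using this
  rw [intervalIntegral.integral_of_le zero_le_one, integral_Ioc_eq_integral_Ioo] at key
  rw [key]; ring

/-- constant-coefficient integral -/
lemma kdv_aux_const (k : ℝ) (hk : 0 < k) :
    (∫ t in Ioo (0:ℝ) 1, 1 / Real.sqrt (t * (1 - t) * k)) = Real.pi / Real.sqrt k := by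
  have hcongr : ∀ t ∈ Ioo (0:ℝ) 1,
      1 / Real.sqrt (t * (1 - t) * k) = (Real.sqrt k)⁻¹ * (1 / Real.sqrt (t * (1 - t))) := by
    intro t ht
    have h0 : (0:ℝ) < t := ht.1
    have h1t : (0:ℝ) < 1 - t := by linarith [ht.2]
    rw [Real.sqrt_mul (by positivity : (0:ℝ) ≤ t * (1 - t))]
    rw [one_div, one_div, mul_inv, inv_mul_eq_div, div_eq_mul_inv, mul_comm]
  rw [setIntegral_congr_fun measurableSet_Ioo hcongr, integral_const_mul, kdv_aux_base,
    inv_mul_eq_div]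

/-- bounds for the variable-coefficient integral -/
lemma kdv_aux_bounds (A B : ℝ) (hA : 0 < A) (hB : 0 < B) (E : ℝ → ℝ)
    (hE : ∀ t, E t = t * B + (1 - t) * A) :
    Real.pi / Real.sqrt (max A B) ≤ (∫ t in Ioo (0:ℝ) 1, 1 / Real.sqrt (t * (1 - t) * E t)) ∧
    (∫ t in Ioo (0:ℝ) 1, 1 / Real.sqrt (t * (1 - t) * E t)) ≤ Real.pi / Real.sqrt (min A B) := by
  set m := min A B with hm
  set M := max A B with hM
  have hm0 : 0 < m := lt_min hA hB
  have hM0 : 0 < M := lt_of_lt_of_le hm0 min_le_max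
  have hEm : ∀ t ∈ Ioo (0:ℝ) 1, m ≤ E t ∧ E t ≤ M := by
    intro t ht
    have h0 : (0:ℝ) < t := ht.1
    have h1t : (0:ℝ) < 1 - t := by linarith [ht.2]
    rw [hE]
    constructor
    · nlinarith [min_le_left A B, min_le_right A B]
    · nlinarith [le_max_left A B, le_max_right A B]
  have hlow : ∀ t ∈ Ioo (0:ℝ) 1,
      1 / Real.sqrt (t * (1 - t) * M) ≤ 1 / Real.sqrt (t * (1 - t) * E t) := by
    intro t ht
    have h0 : (0:ℝ) < t := ht.1
    have h1t : (0:ℝ) < 1 - t := by linarith [ht.2]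
    have hEt := hEm t ht
    have hEt0 : 0 < E t := lt_of_lt_of_le hm0 hEt.1
    apply one_div_le_one_div_of_le (Real.sqrt_pos.2 (mul_pos (mul_pos h0 h1t) hEt0))
    exact Real.sqrt_le_sqrt (mul_le_mul_of_nonneg_left hEt.2 (mul_pos h0 h1t).le)
  have hup : ∀ t ∈ Ioo (0:ℝ) 1,
      1 / Real.sqrt (t * (1 - t) * E t) ≤ 1 / Real.sqrt (t * (1 - t) * m) := by
    intro t ht
    have h0 : (0:ℝ) < t := ht.1
    have h1t : (0:ℝ) < 1 - t := by linarith [ht.2]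
    have hEt := hEm t ht
    apply one_div_le_one_div_of_le (Real.sqrt_pos.2 (mul_pos (mul_pos h0 h1t) hm0))
    exact Real.sqrt_le_sqrt (mul_le_mul_of_nonneg_left hEt.1 (mul_pos h0 h1t).le)
  have hIm : IntegrableOn (fun t : ℝ => 1 / Real.sqrt (t * (1 - t) * m)) (Ioo (0:ℝ) 1) := by
    have base : IntegrableOn (fun t : ℝ => 1 / Real.sqrt (t * (1 - t)) * (Real.sqrt m)⁻¹)
        (Ioo (0:ℝ) 1) := kdv_aux_integrable.mul_const _
    refine base.congr_fun (fun t ht => ?_) measurableSet_Ioo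
    have h0 : (0:ℝ) < t := ht.1
    have h1t : (0:ℝ) < 1 - t := by linarith [ht.2]
    beta_reduce; rw [Real.sqrt_mul (by positivity : (0:ℝ) ≤ t * (1 - t)), one_div, one_div, ← mul_inv]
  have hIM : IntegrableOn (fun t : ℝ => 1 / Real.sqrt (t * (1 - t) * M)) (Ioo (0:ℝ) 1) := by
    have base : IntegrableOn (fun t : ℝ => 1 / Real.sqrt (t * (1 - t)) * (Real.sqrt M)⁻¹)
        (Ioo (0:ℝ) 1) := kdv_aux_integrable.mul_const _
    refine base.congr_fun (fun t ht => ?_) measurableSet_Ioo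
    have h0 : (0:ℝ) < t := ht.1
    have h1t : (0:ℝ) < 1 - t := by linarith [ht.2]
    beta_reduce; rw [Real.sqrt_mul (by positivity : (0:ℝ) ≤ t * (1 - t)), one_div, one_div, ← mul_inv]
  have hIE : IntegrableOn (fun t : ℝ => 1 / Real.sqrt (t * (1 - t) * E t)) (Ioo (0:ℝ) 1) := by
    refine Integrable.mono' hIm ?_ ?_
    · have hEeq : E = fun t => t * B + (1 - t) * A := funext hE
      rw [hEeq]
      exact (Measurable.aestronglyMeasurable (by fun_prop))
    · rw [ae_restrict_iff' measurableSet_Ioo]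
      refine Filter.Eventually.of_forall (fun t ht => ?_)
      rw [Real.norm_of_nonneg (by positivity)]
      exact hup t ht
  constructor
  · rw [← kdv_aux_const M hM0]
    exact setIntegral_mono_on hIM hIE measurableSet_Ioo hlow
  · rw [← kdv_aux_const m hm0]
    exact setIntegral_mono_on hIE hIm measurableSet_Ioo hup

/-- For `b > 0`, `I(b,c) → π/√b` as `c → 0`, and `∫₀¹ dt/√(t(1−t)) = π`. -/
theorem kdv_period_integral_limit (b : ℝ) (hb : 0 < b) :
    let y₀ : ℝ → ℝ := fun c => (-3 * b + Real.sqrt (9 * b^2 + 24 * c)) / 2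
    let y₁ : ℝ → ℝ := fun c => -(3 * b + Real.sqrt (9 * b^2 + 24 * c)) / 2
    let I : ℝ → ℝ := fun c => Real.sqrt 3 *
      ∫ t in Ioo (0:ℝ) 1, 1 / Real.sqrt (t * (1 - t) * (y₀ c * t - y₁ c))
    Tendsto I (nhdsWithin 0 {c : ℝ | c ≠ 0}) (nhds (Real.pi / Real.sqrt b)) ∧
    (∫ t in Ioo (0:ℝ) 1, 1 / Real.sqrt (t * (1 - t))) = Real.pi := by
  intro y₀ y₁ I
  refine ⟨?_, kdv_aux_base⟩
  have hs0 : Real.sqrt (9 * b^2 + 24 * 0) = 3 * b := by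
    rw [show 9 * b^2 + 24 * (0:ℝ) = (3*b)^2 by ring, Real.sqrt_sq (by positivity)]
  have hsqrt3 : (0:ℝ) < Real.sqrt 3 := Real.sqrt_pos.2 (by norm_num)
  have hval : Real.sqrt 3 * (Real.pi / Real.sqrt (3 * b)) = Real.pi / Real.sqrt b := by
    rw [Real.sqrt_mul (by norm_num : (0:ℝ) ≤ 3)]
    have hsb : (0:ℝ) < Real.sqrt b := Real.sqrt_pos.2 hb
    field_simp
  have hlim : ∀ F : ℝ → ℝ, Continuous F → F 0 = 3 * b →
      Tendsto (fun c => Real.sqrt 3 * (Real.pi / Real.sqrt (F c)))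
        (nhdsWithin 0 {c : ℝ | c ≠ 0}) (nhds (Real.pi / Real.sqrt b)) := by
    intro F hF hF0
    have hcont : ContinuousAt (fun c => Real.sqrt 3 * (Real.pi / Real.sqrt (F c))) 0 := by
      apply ContinuousAt.mul continuousAt_const
      apply ContinuousAt.div continuousAt_const
      · exact (Real.continuous_sqrt.comp hF).continuousAt
      · rw [hF0]
        positivity
    have ht' := hcont.tendsto.mono_left
      (nhdsWithin_le_nhds (s := {c : ℝ | c ≠ 0}) (a := (0:ℝ)))
    simp only [hF0] at ht'
    rwa [hval] at ht'
  have hlower := hlim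
    (fun c => max ((3 * b + Real.sqrt (9 * b^2 + 24 * c)) / 2) (Real.sqrt (9 * b^2 + 24 * c)))
    (Continuous.max (by continuity) (by continuity))
    (by beta_reduce; rw [hs0]; norm_num)
  have hupper := hlim
    (fun c => min ((3 * b + Real.sqrt (9 * b^2 + 24 * c)) / 2) (Real.sqrt (9 * b^2 + 24 * c)))
    (Continuous.min (by continuity) (by continuity))
    (by beta_reduce; rw [hs0]; norm_num)
  refine tendsto_of_tendsto_of_tendsto_of_le_of_le' hlower hupper ?_ ?_
  all_goals {
    have hmem : {c : ℝ | |c| < b^2/8} ∈ nhdsWithin (0:ℝ) {c : ℝ | c ≠ 0} := by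
      apply nhdsWithin_le_nhds
      have hb8 : (0:ℝ) < b^2/8 := by positivity
      have := Metric.ball_mem_nhds (0:ℝ) hb8
      simpa [Metric.ball, Real.dist_eq] using this
    filter_upwards [hmem] with c hc
    have habs : |c| < b^2/8 := hc
    have hpos : 0 < 9 * b^2 + 24 * c := by
      have h := abs_lt.1 habs
      nlinarith [h.1]
    have hsc : 0 < Real.sqrt (9 * b^2 + 24 * c) := Real.sqrt_pos.2 hpos
    have hAc : (0:ℝ) < (3 * b + Real.sqrt (9 * b^2 + 24 * c)) / 2 := by positivity
    have hE : ∀ t : ℝ, y₀ c * t - y₁ c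
        = t * Real.sqrt (9 * b^2 + 24 * c)
          + (1 - t) * ((3 * b + Real.sqrt (9 * b^2 + 24 * c)) / 2) := by
      intro t
      simp only [y₀, y₁]
      ring
    have hbd := kdv_aux_bounds ((3 * b + Real.sqrt (9 * b^2 + 24 * c)) / 2)
      (Real.sqrt (9 * b^2 + 24 * c)) hAc hsc (fun t => y₀ c * t - y₁ c) hE
    simp only [I]
    first
    | exact mul_le_mul_of_nonneg_left hbd.1 hsqrt3.le
    | exact mul_le_mul_of_nonneg_left hbd.2 hsqrt3.le
  }
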